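/- Let q be an odd prime power, φ the quadratic character of F_q, and A any multiplicative character. Then the Gauss sums satisfy the duplication formula g(A)·g(φA) = g(A²)·g(φ)·A(4)⁻¹, i.e., g(A)g(φA) = g(A²)g(φ)·Ā(4) where Ā denotes the inverse character. -/

import Mathlib

set_option linter.unnecessarySimpa false


open scoped Classical
open Finset

section Aux

variable {F : Type*} [Field F] [Fintype F] [DecidableEq F]

/-- A nontrivial character of order dividing 2 agrees with the quadratic character. -/
lemma MulChar.eq_quadraticChar_of_sq_eq_one (hF : ringChar F ≠ 2)
    {φ : MulChar F ℂ} (hφ2 : φ ^ 2 = 1) (hφ : φ ≠ 1) (a : F) :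
    φ a = ((quadraticChar F a : ℤ) : ℂ) := by
  obtain ⟨g, hg⟩ := IsCyclic.exists_generator (α := Fˣ)
  have hord : orderOf g = Fintype.card Fˣ := by
    rw [orderOf_eq_card_of_forall_mem_zpowers hg, Nat.card_eq_fintype_card]
  have hcard : Fintype.card Fˣ = Fintype.card F - 1 := Fintype.card_units (α := F)
  have hoddF : Fintype.card F % 2 = 1 := FiniteField.odd_card_of_char_ne_two hF
  have hpos : 0 < Fintype.card F := Fintype.card_pos
  have heven : 2 ∣ Fintype.card Fˣ := by omega
  have hmem : ∀ u : Fˣ, ∃ k : ℕ, g ^ k = u := by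
    intro u
    exact (mem_powers_iff_mem_zpowers.mpr (hg u)).imp fun k hk => hk
  have hφg2 : φ (g : F) * φ (g : F) = 1 := by
    have h := congrArg (fun χ : MulChar F ℂ => χ (g : F)) hφ2
    simpa [pow_two] using h
  have hφg : φ (g : F) = -1 := by
    rcases mul_self_eq_one_iff.mp hφg2 with h | h
    · exfalso
      apply hφ
      apply MulChar.ext
      intro u
      obtain ⟨k, hk⟩ := hmem u
      rw [MulChar.one_apply_coe, ← hk]
      push_cast
      rw [map_pow, h, one_pow]
    · exact h
  have hqg : quadraticChar F (g : F) = -1 := by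
    rw [quadraticChar_neg_one_iff_not_isSquare]
    rintro ⟨x, hx⟩
    have hx0 : x ≠ 0 := by
      rintro rfl
      exact g.ne_zero (by simpa using hx)
    obtain ⟨k, hk⟩ := hmem (Units.mk0 x hx0)
    have hgu : g = Units.mk0 x hx0 * Units.mk0 x hx0 := by
      apply Units.ext
      rw [Units.val_mul, Units.val_mk0]
      exact hx
    have hpow : g ^ (2 * k) = g ^ 1 := by
      rw [pow_one, two_mul, pow_add, hk, ← hgu]
    have hmod := (pow_eq_pow_iff_modEq.mp hpow)
    have hmod2 : (2 * k) % 2 = 1 % 2 := (Nat.ModEq.of_dvd (hord ▸ heven) hmod)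
    omega
  by_cases ha : a = 0
  · simp [ha]
  · obtain ⟨k, hk⟩ := hmem (Units.mk0 a ha)
    have ha' : a = (g : F) ^ k := by
      have := congrArg (Units.val) hk
      push_cast at this
      simpa using this.symm
    rw [ha', map_pow, map_pow, hφg, hqg]
    push_cast
    ring

lemma jacobiSum_self_eq (hF : ringChar F ≠ 2)
    {φ : MulChar F ℂ} (hφ2 : φ ^ 2 = 1) (hφ : φ ≠ 1)
    {A : MulChar F ℂ} (hA : A ≠ 1) :
    jacobiSum A A = A⁻¹ 4 * jacobiSum φ A := by
  have h2 : (2 : F) ≠ 0 := Ring.two_ne_zero hF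
  have h4 : (4 : F) ≠ 0 := by
    have : (4 : F) = 2 * 2 := by norm_num
    rw [this]; exact mul_ne_zero h2 h2
  -- Step 1: J(A,A) = ∑ x, A (x * (1 - x))
  have step1 : jacobiSum A A = ∑ x : F, A (x * (1 - x)) := by
    simp only [jacobiSum, map_mul]
  -- Step 2: reindex x = (1+s)/2
  have step2 : ∑ x : F, A (x * (1 - x)) = ∑ s : F, A ((1 - s ^ 2) * 4⁻¹) := by
    have hbij : Function.Bijective (fun s : F => (1 + s) * 2⁻¹) := by
      refine Finite.injective_iff_bijective.mp ?_
      intro a b h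
      field_simp at h
      exact add_left_cancel h
    refine (Fintype.sum_bijective _ hbij _ _ fun s => ?_).symm
    congr 1
    field_simp
    ring
  -- Step 3: pull out A⁻¹ 4
  have step3 : ∑ s : F, A ((1 - s ^ 2) * 4⁻¹) = (∑ s : F, A (1 - s ^ 2)) * A⁻¹ 4 := by
    rw [Finset.sum_mul]
    refine Fintype.sum_congr _ _ fun s => ?_
    rw [map_mul, MulChar.inv_apply' A 4]
  -- Step 4: count square roots
  have step4 : ∑ s : F, A (1 - s ^ 2) = ∑ u : F, (1 + φ u) * A (1 - u) := by
    rw [← Finset.sum_fiberwise (univ : Finset F) (fun s : F => s ^ 2) (fun s => A (1 - s ^ 2))]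
    refine Fintype.sum_congr _ _ fun u => ?_
    have hcount : (#({x : F | x ^ 2 = u}.toFinset) : ℤ) = quadraticChar F u + 1 :=
      quadraticChar_card_sqrts hF u
    have hfe : ({x : F | x ^ 2 = u}.toFinset) = univ.filter (fun s : F => s ^ 2 = u) := by
      ext x; simp
    calc ∑ s ∈ univ.filter (fun s : F => s ^ 2 = u), A (1 - s ^ 2)
        = ∑ s ∈ univ.filter (fun s : F => s ^ 2 = u), A (1 - u) := by
          refine Finset.sum_congr rfl fun s hs => ?_
          rw [Finset.mem_filter] at hs
          rw [hs.2]
      _ = (#(univ.filter (fun s : F => s ^ 2 = u)) : ℂ) * A (1 - u) := by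
          rw [Finset.sum_const, nsmul_eq_mul]
      _ = (1 + φ u) * A (1 - u) := by
          congr 1
          rw [hfe] at hcount
          rw [MulChar.eq_quadraticChar_of_sq_eq_one hF hφ2 hφ u]
          have : ((#(univ.filter (fun s : F => s ^ 2 = u)) : ℤ) : ℂ)
              = ((quadraticChar F u : ℤ) : ℂ) + 1 := by
            rw [hcount]; push_cast; ring
          push_cast at this ⊢
          rw [this]; ring
  -- Step 5: split the sum
  have step5 : ∑ u : F, (1 + φ u) * A (1 - u) = jacobiSum φ A := by
    have hsplit : ∑ u : F, (1 + φ u) * A (1 - u)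
        = (∑ u : F, A (1 - u)) + ∑ u : F, φ u * A (1 - u) := by
      rw [← Finset.sum_add_distrib]
      refine Fintype.sum_congr _ _ fun u => ?_
      ring
    have hz : ∑ u : F, A (1 - u) = 0 := by
      have h := Equiv.sum_comp (Equiv.subLeft (1 : F)) (fun v => A v)
      simp only [Equiv.subLeft_apply] at h
      rw [h]
      exact MulChar.sum_eq_zero_of_ne_one hA
    rw [hsplit, hz, zero_add]
    rfl
  rw [step1, step2, step3, step4, step5, mul_comm]

end Aux

/-- Duplication (Hasse–Davenport, m = 2): `g(A)·g(φA) = g(A²)·g(φ)·Ā(4)`. -/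
theorem gaussSum_duplication
    {F : Type*} [Field F] [Fintype F] [DecidableEq F]
    (hodd : Odd (Fintype.card F))
    (φ : MulChar F ℂ) (hφ2 : φ ^ 2 = 1) (hφ : φ ≠ 1)
    (ψ : AddChar F ℂ) (hψ : ψ ≠ 1) (A : MulChar F ℂ) :
    gaussSum A ψ * gaussSum (φ * A) ψ =
      gaussSum (A ^ 2) ψ * gaussSum φ ψ * A⁻¹ 4 := by
  have hF : ringChar F ≠ 2 := by
    intro h
    have h0 := FiniteField.even_card_iff_char_two.mp h
    rw [Nat.odd_iff] at hodd
    omega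
  have h2 : (2 : F) ≠ 0 := Ring.two_ne_zero hF
  have h4 : (4 : F) ≠ 0 := by
    have h44 : (4 : F) = 2 * 2 := by norm_num
    rw [h44]; exact mul_ne_zero h2 h2
  have hprim : ψ.IsPrimitive := AddChar.IsPrimitive.of_ne_one hψ
  by_cases hA1 : A = 1
  · subst hA1
    simp only [one_pow, mul_one, inv_one]
    rw [MulChar.one_apply (isUnit_iff_ne_zero.mpr h4), mul_one]
  by_cases hA2 : A ^ 2 = 1
  · -- in this case `A = φ`
    have hAφ : A = φ := by
      apply MulChar.ext'
      intro a
      rw [MulChar.eq_quadraticChar_of_sq_eq_one hF hA2 hA1 a,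
        MulChar.eq_quadraticChar_of_sq_eq_one hF hφ2 hφ a]
    subst hAφ
    have hinv : A⁻¹ = A := inv_eq_of_mul_eq_one_left (by rw [← sq, hA2])
    have h4A : A⁻¹ 4 = 1 := by
      rw [hinv]
      have h44 : (4 : F) = 2 * 2 := by norm_num
      calc A 4 = A 2 * A 2 := by rw [h44, map_mul]
        _ = (A ^ 2) 2 := by rw [sq, MulChar.mul_apply]
        _ = 1 := by rw [hA2, MulChar.one_apply (isUnit_iff_ne_zero.mpr h2)]
    rw [h4A, mul_one, ← sq]
    ring
  · have hAA : A * A ≠ 1 := by rwa [← sq]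
    have hφA : φ * A ≠ 1 := by
      intro h
      apply hA2
      have hA : A = φ := by
        rw [← inv_eq_of_mul_eq_one_right h,
          inv_eq_of_mul_eq_one_right (show φ * φ = 1 by rw [← sq, hφ2])]
      rw [hA, hφ2]
    have h1 := jacobiSum_mul_nontrivial hAA ψ
    have h2' := jacobiSum_mul_nontrivial hφA ψ
    have hkey := jacobiSum_self_eq hF hφ2 hφ hA1
    have hcard0 : ((Fintype.card F : ℂ)) ≠ 0 :=
      Nat.cast_ne_zero.mpr Fintype.card_pos.ne'
    have hg : gaussSum A ψ ≠ 0 := gaussSum_ne_zero_of_nontrivial hcard0 hA1 hprim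
    apply mul_right_cancel₀ hg
    rw [sq]
    linear_combination (-(gaussSum (φ * A) ψ)) * h1 +
      (gaussSum (A * A) ψ * A⁻¹ 4) * h2' +
      (gaussSum (φ * A) ψ * gaussSum (A * A) ψ) * hkey
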